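/- arXiv:2301.07875 — 2 statements merged into one kernel-verified Lean document; each statement's English description precedes it below -/
import Mathlib

section
/- Let $k, \tau, \lambda$ be real numbers with $\tau \geq 1$ and $k^2 + \tau^2 - \lambda^2 \geq 1$, and let $s = \sqrt{k^2 + (\tau + i\lambda)^2}$ (principal branch). Then $|\mathrm{Im}\, s| \leq \sqrt{5}\, |\lambda|$. -/
theorem stmt_1 (k τ l : ℝ) (hτ : 1 ≤ τ) (h : 1 ≤ k ^ 2 + τ ^ 2 - l ^ 2) :
    |((((k : ℂ) ^ 2 + ((τ : ℂ) + (l : ℂ) * Complex.I) ^ 2)) ^ ((1 : ℂ) / 2)).im| ≤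
      Real.sqrt 5 * |l| := by
  set z : ℂ := (k : ℂ) ^ 2 + ((τ : ℂ) + (l : ℂ) * Complex.I) ^ 2 with hz
  set s : ℂ := z ^ ((1 : ℂ) / 2) with hs
  have hsq : s ^ 2 = z := by
    rw [hs, one_div]
    exact Complex.cpow_nat_inv_pow z (by norm_num)
  have hre : z.re = k ^ 2 + τ ^ 2 - l ^ 2 := by
    simp [hz, Complex.add_re, Complex.mul_re, Complex.mul_im, pow_two]
    ring
  have him : z.im = 2 * τ * l := by
    simp [hz, Complex.add_im, Complex.mul_re, Complex.mul_im, pow_two]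
    ring
  have habs : ‖z‖ = Real.sqrt ((k ^ 2 + τ ^ 2 - l ^ 2) ^ 2 + (2 * τ * l) ^ 2) := by
    rw [Complex.norm_def, Complex.normSq_apply, hre, him]
    ring_nf
  have habs_s : ‖s‖ ^ 2 = ‖z‖ := by
    rw [← hsq, norm_pow]
  have h1 : s.re ^ 2 + s.im ^ 2 = ‖z‖ := by
    rw [← habs_s, Complex.sq_norm, Complex.normSq_apply]; ring
  have h2 : s.re ^ 2 - s.im ^ 2 = z.re := by
    have := congrArg Complex.re hsq
    simp [pow_two, Complex.mul_re] at this
    nlinarith [this]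
  -- key bound: abs z ≤ z.re + 10 l^2
  have hkey : ‖z‖ ≤ (k ^ 2 + τ ^ 2 - l ^ 2) + 10 * l ^ 2 := by
    rw [habs]
    have hnn : 0 ≤ (k ^ 2 + τ ^ 2 - l ^ 2) + 10 * l ^ 2 := by nlinarith
    have : (k ^ 2 + τ ^ 2 - l ^ 2) ^ 2 + (2 * τ * l) ^ 2 ≤
        ((k ^ 2 + τ ^ 2 - l ^ 2) + 10 * l ^ 2) ^ 2 := by nlinarith
    calc Real.sqrt ((k ^ 2 + τ ^ 2 - l ^ 2) ^ 2 + (2 * τ * l) ^ 2)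
        ≤ Real.sqrt (((k ^ 2 + τ ^ 2 - l ^ 2) + 10 * l ^ 2) ^ 2) := Real.sqrt_le_sqrt this
      _ = (k ^ 2 + τ ^ 2 - l ^ 2) + 10 * l ^ 2 := Real.sqrt_sq hnn
  have him2 : s.im ^ 2 ≤ 5 * l ^ 2 := by
    have : 2 * s.im ^ 2 = ‖z‖ - z.re := by linarith
    rw [hre] at this
    linarith
  calc |s.im| = Real.sqrt (s.im ^ 2) := (Real.sqrt_sq_eq_abs _).symm
    _ ≤ Real.sqrt (5 * l ^ 2) := Real.sqrt_le_sqrt him2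
    _ = Real.sqrt 5 * |l| := by
        rw [Real.sqrt_mul (by norm_num), Real.sqrt_sq_eq_abs]
end

section
/- Let $z \in \mathbb{C}$ with $\mathrm{Re}\, z > 0$ and let $\delta > 1/2$. For $f$ with $\langle t\rangle^{\delta} f \in L^2(\mathbb{R})$, define $u(x) = -\int_x^\infty f(t) e^{-z(t-x)}\,\mathrm{d}t$. Then there is a constant $C_\delta$, depending only on $\delta$, such that $\|\langle t\rangle^{-\delta} u\|_{L^2(\mathbb{R})} \leq C_\delta \|\langle t\rangle^{\delta} f\|_{L^2(\mathbb{R})}$. -/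
open MeasureTheory

theorem stmt_10 (δ : ℝ) (hδ : 1 / 2 < δ) :
    ∃ C : ℝ, ∀ (z : ℂ), 0 < z.re → ∀ f : ℝ → ℂ,
      AEStronglyMeasurable f (volume : Measure ℝ) →
      Integrable (fun t : ℝ => (1 + t ^ 2) ^ δ * ‖f t‖ ^ 2) →
      Real.sqrt (∫ x : ℝ, (1 + x ^ 2) ^ (-δ) *
          ‖-(∫ t in Set.Ioi x, f t * Complex.exp (-z * (t - x)))‖ ^ 2) ≤
        C * Real.sqrt (∫ t : ℝ, (1 + t ^ 2) ^ δ * ‖f t‖ ^ 2) := by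
  have hpos : ∀ t : ℝ, (0:ℝ) < 1 + t ^ 2 := fun t => by positivity
  have hI : Integrable (fun t : ℝ => (1 + t ^ 2) ^ (-δ)) := by
    have := integrable_rpow_neg_one_add_norm_sq (E := ℝ) (μ := volume)
      (r := 2 * δ) (by simp; linarith)
    refine this.congr (Filter.Eventually.of_forall fun t => ?_)
    norm_num [Real.norm_eq_abs, sq_abs]
    ring_nf
  set I : ℝ := ∫ t : ℝ, (1 + t ^ 2) ^ (-δ) with hIdef
  have hInn : 0 ≤ I := integral_nonneg fun t => Real.rpow_nonneg (hpos t).le _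
  refine ⟨I, ?_⟩
  intro z hz f hf hN
  set N : ℝ := ∫ t : ℝ, (1 + t ^ 2) ^ δ * ‖f t‖ ^ 2 with hNdef
  have hNnn : 0 ≤ N := integral_nonneg fun t => by positivity
  -- the two L² functions
  set a : ℝ → ℝ := fun t => (1 + t ^ 2) ^ (-(δ/2)) with ha
  set g : ℝ → ℝ := fun t => (1 + t ^ 2) ^ (δ/2) * ‖f t‖ with hg
  have ha2 : ∀ t, a t ^ 2 = (1 + t ^ 2) ^ (-δ) := fun t => by
    simp only [ha]
    rw [sq, ← Real.rpow_add (hpos t)]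
    ring_nf
  have hg2 : ∀ t, g t ^ 2 = (1 + t ^ 2) ^ δ * ‖f t‖ ^ 2 := fun t => by
    simp only [hg]
    rw [mul_pow, sq ((1 + t^2) ^ (δ/2)), ← Real.rpow_add (hpos t)]
    ring_nf
  have hag : ∀ t, a t * g t = ‖f t‖ := fun t => by
    rw [ha, hg, ← mul_assoc, ← Real.rpow_add (hpos t)]
    norm_num
  have hgm : AEStronglyMeasurable g (volume : Measure ℝ) := by
    rw [hg]
    exact (Measurable.aestronglyMeasurable (by fun_prop)).mul hf.norm
  have haM : MemLp a 2 (volume : Measure ℝ) := by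
    rw [memLp_two_iff_integrable_sq (by rw [ha]; exact Measurable.aestronglyMeasurable (by fun_prop))]
    exact hI.congr (Filter.Eventually.of_forall fun t => (ha2 t).symm)
  have hgM : MemLp g 2 (volume : Measure ℝ) := by
    rw [memLp_two_iff_integrable_sq hgm]
    exact hN.congr (Filter.Eventually.of_forall fun t => (hg2 t).symm)
  -- f is integrable
  have hfint : Integrable f := by
    rw [← integrable_norm_iff hf]
    have : Integrable (a • g) :=
      memLp_one_iff_integrable.mp (hgM.smul haM (r := 1)
        (hpqr := ⟨by rw [inv_one]; simp [ENNReal.inv_two_add_inv_two, one_div]⟩))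
    refine this.congr (Filter.Eventually.of_forall fun t => ?_)
    simp only [Pi.smul_apply, smul_eq_mul]
    exact hag t
  -- Cauchy–Schwarz
  set M : ℝ := ∫ t : ℝ, ‖f t‖ with hMdef
  have hMnn : 0 ≤ M := integral_nonneg fun t => norm_nonneg _
  have hCS : M ≤ Real.sqrt I * Real.sqrt N := by
    have h22 : Real.HolderConjugate 2 2 := Real.HolderConjugate.two_two
    have haM' : MemLp a (ENNReal.ofReal 2) (volume : Measure ℝ) := by
      rw [show ENNReal.ofReal 2 = 2 by norm_num]; exact haM
    have hgM' : MemLp g (ENNReal.ofReal 2) (volume : Measure ℝ) := by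
      rw [show ENNReal.ofReal 2 = 2 by norm_num]; exact hgM
    have key := integral_mul_le_Lp_mul_Lq_of_nonneg (μ := volume) (f := a) (g := g) h22
      (Filter.Eventually.of_forall fun t => by
        show (0:ℝ) ≤ a t
        rw [ha]; positivity)
      (Filter.Eventually.of_forall fun t => by
        show (0:ℝ) ≤ g t
        rw [hg]; positivity) haM' hgM'
    have e1 : (∫ t : ℝ, a t ^ (2:ℝ)) = I := by
      rw [hIdef]
      exact integral_congr_ae (Filter.Eventually.of_forall fun t => by
        show a t ^ (2:ℝ) = (1 + t ^ 2) ^ (-δ)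
        rw [Real.rpow_two]; exact ha2 t)
    have e2 : (∫ t : ℝ, g t ^ (2:ℝ)) = N := by
      rw [hNdef]
      exact integral_congr_ae (Filter.Eventually.of_forall fun t => by
        show g t ^ (2:ℝ) = (1 + t ^ 2) ^ δ * ‖f t‖ ^ 2
        rw [Real.rpow_two]; exact hg2 t)
    have e3 : (∫ t : ℝ, a t * g t) = M := by
      rw [hMdef]
      exact integral_congr_ae (Filter.Eventually.of_forall fun t => hag t)
    rw [e1, e2, e3, ← Real.sqrt_eq_rpow, ← Real.sqrt_eq_rpow] at key
    exact key
  -- pointwise bound on u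
  have hu : ∀ x : ℝ, ‖∫ t in Set.Ioi x, f t * Complex.exp (-z * (t - x))‖ ≤ M := by
    intro x
    refine le_trans (norm_integral_le_integral_norm _) ?_
    have h2 : (∫ t in Set.Ioi x, ‖f t‖) ≤ M :=
      setIntegral_le_integral (s := Set.Ioi x) hfint.norm
        (Filter.Eventually.of_forall fun t => norm_nonneg _)
    refine le_trans ?_ h2
    refine integral_mono_of_nonneg (Filter.Eventually.of_forall fun t => norm_nonneg _)
      (hfint.norm.integrableOn) ?_
    filter_upwards [ae_restrict_mem measurableSet_Ioi] with t ht
    rw [norm_mul]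
    have hre : (-z * ((t:ℂ) - (x:ℂ))).re = -(z.re * (t - x)) := by
      simp [Complex.mul_re]
    have : ‖Complex.exp (-z * ((t:ℂ) - (x:ℂ)))‖ ≤ 1 := by
      rw [Complex.norm_exp, hre, Real.exp_le_one_iff]
      have : (0:ℝ) ≤ t - x := by
        have := le_of_lt (Set.mem_Ioi.mp ht); linarith
      nlinarith [hz.le]
    calc ‖f t‖ * ‖Complex.exp (-z * ((t:ℂ) - (x:ℂ)))‖ ≤ ‖f t‖ * 1 :=
          mul_le_mul_of_nonneg_left this (norm_nonneg _)
      _ = ‖f t‖ := mul_one _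
  -- main integral bound
  have hmain : (∫ x : ℝ, (1 + x ^ 2) ^ (-δ) *
      ‖-(∫ t in Set.Ioi x, f t * Complex.exp (-z * (t - x)))‖ ^ 2) ≤ I * M ^ 2 := by
    have hRHS : Integrable (fun x : ℝ => (1 + x ^ 2) ^ (-δ) * M ^ 2) := hI.mul_const _
    calc (∫ x : ℝ, (1 + x ^ 2) ^ (-δ) *
        ‖-(∫ t in Set.Ioi x, f t * Complex.exp (-z * (t - x)))‖ ^ 2)
        ≤ ∫ x : ℝ, (1 + x ^ 2) ^ (-δ) * M ^ 2 := by
          refine integral_mono_of_nonneg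
            (Filter.Eventually.of_forall fun x => by positivity) hRHS
            (Filter.Eventually.of_forall fun x => ?_)
          have h1 : ‖-(∫ t in Set.Ioi x, f t * Complex.exp (-z * (t - x)))‖ ^ 2 ≤ M ^ 2 := by
            rw [norm_neg]
            exact pow_le_pow_left₀ (norm_nonneg _) (hu x) 2
          exact mul_le_mul_of_nonneg_left h1 (Real.rpow_nonneg (hpos x).le _)
      _ = I * M ^ 2 := by rw [← integral_mul_const]
  -- conclude
  have hstep : (∫ x : ℝ, (1 + x ^ 2) ^ (-δ) *
      ‖-(∫ t in Set.Ioi x, f t * Complex.exp (-z * (t - x)))‖ ^ 2) ≤ I * I * N := by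
    refine hmain.trans ?_
    have : M ^ 2 ≤ (Real.sqrt I * Real.sqrt N) ^ 2 := pow_le_pow_left₀ hMnn hCS 2
    calc I * M ^ 2 ≤ I * (Real.sqrt I * Real.sqrt N) ^ 2 :=
          mul_le_mul_of_nonneg_left this hInn
      _ = I * I * N := by
          rw [mul_pow, Real.sq_sqrt hInn, Real.sq_sqrt hNnn]; ring
  calc Real.sqrt (∫ x : ℝ, (1 + x ^ 2) ^ (-δ) *
        ‖-(∫ t in Set.Ioi x, f t * Complex.exp (-z * (t - x)))‖ ^ 2)
      ≤ Real.sqrt (I * I * N) := Real.sqrt_le_sqrt hstep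
    _ = I * Real.sqrt N := by
        rw [Real.sqrt_mul (by positivity), Real.sqrt_mul_self hInn]
end
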